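/- arXiv:2008.03524 — 2 statements merged into one kernel-verified Lean document; each statement's English description precedes it below -/
import Mathlib

section
/- For real z with 0 < z < 1: ₂F₁(1/3, 2/3; -1/2; z) = [(3 - 6z) cos((1/3) arcsin(√z)) + √(z(1-z)) sin((1/3) arcsin(√z))] / (3(1-z)^{3/2}). -/
open scoped BigOperators

/-- Pochhammer symbol `(a)_k` on `ℝ`. -/
noncomputable def pochR (a : ℝ) (k : ℕ) : ℝ := ∏ i ∈ Finset.range k, (a + i)

/-- Gauss hypergeometric series `₂F₁(a,b;c;z)` on `ℝ`. -/
noncomputable def hyp2F1R (a b c z : ℝ) : ℝ :=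
  ∑' k : ℕ, pochR a k * pochR b k / (pochR c k * (k.factorial : ℝ)) * z ^ k

namespace Hyp

lemma pochR_succ (a : ℝ) (k : ℕ) : pochR a (k+1) = pochR a k * (a + k) :=
  Finset.prod_range_succ _ _

lemma pochR_zero (a : ℝ) : pochR a 0 = 1 := Finset.prod_range_zero _

lemma pochR_pos {a : ℝ} (ha : 0 < a) (k : ℕ) : 0 < pochR a k := by
  induction k with
  | zero => simp [pochR_zero]
  | succ k ih => rw [pochR_succ]; positivity

lemma poch_32 (k : ℕ) : pochR (3/2) k = pochR (1/2) k * (2*k+1) := by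
  induction k with
  | zero => simp [pochR_zero]
  | succ k ih => rw [pochR_succ, pochR_succ, ih]; push_cast; ring

lemma poch_half (k : ℕ) : pochR (1/2) k = pochR (-1/2) k * (1 - 2*k) := by
  induction k with
  | zero => simp [pochR_zero]
  | succ k ih => rw [pochR_succ, pochR_succ, ih]; push_cast; ring

lemma one_sub_two_ne (k : ℕ) : (1 : ℝ) - 2*k ≠ 0 := by
  rcases k with _ | k
  · norm_num
  · push_cast; nlinarith [Nat.cast_nonneg (α := ℝ) k]

lemma poch_neghalf_ne (k : ℕ) : pochR (-1/2) k ≠ 0 := by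
  intro h
  have h1 := poch_half k
  rw [h, zero_mul] at h1
  exact (pochR_pos (by norm_num : (0:ℝ) < 1/2) k).ne' h1

noncomputable def Aa (k : ℕ) : ℝ :=
  pochR (1/3) k * pochR (2/3) k / (pochR (3/2) k * (k.factorial : ℝ))

noncomputable def Bb (k : ℕ) : ℝ :=
  pochR (1/3) k * pochR (2/3) k / (pochR (1/2) k * (k.factorial : ℝ))

noncomputable def Cc (k : ℕ) : ℝ :=
  pochR (1/3) k * pochR (2/3) k / (pochR (-1/2) k * (k.factorial : ℝ))

lemma fact_ne (k : ℕ) : ((k.factorial : ℝ)) ≠ 0 := by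
  exact_mod_cast k.factorial_ne_zero

lemma B_eq (k : ℕ) : Bb k = (2*(k:ℝ)+1) * Aa k := by
  unfold Bb Aa
  rw [poch_32]
  have h1 := (pochR_pos (by norm_num : (0:ℝ) < 1/2) k).ne'
  have h2 : (2*(k:ℝ)+1) ≠ 0 := by positivity
  field_simp

lemma C_eq (k : ℕ) : Cc k = (1 - 2*(k:ℝ)) * Bb k := by
  unfold Cc Bb
  rw [poch_half]
  have h1 := poch_neghalf_ne k
  have h2 := one_sub_two_ne k
  field_simp

lemma Aa_pos (k : ℕ) : 0 < Aa k := by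
  unfold Aa
  have := pochR_pos (by norm_num : (0:ℝ) < 1/3) k
  have := pochR_pos (by norm_num : (0:ℝ) < 2/3) k
  have := pochR_pos (by norm_num : (0:ℝ) < 3/2) k
  have : (0:ℝ) < k.factorial := by exact_mod_cast k.factorial_pos
  positivity

lemma Aa_zero : Aa 0 = 1 := by simp [Aa, pochR_zero]
lemma Bb_zero : Bb 0 = 1 := by simp [Bb, pochR_zero]

lemma Aa_succ (k : ℕ) :
    Aa (k+1) * ((3/2 + (k:ℝ)) * ((k:ℝ)+1)) = Aa k * ((1/3 + (k:ℝ)) * (2/3 + (k:ℝ))) := by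
  unfold Aa
  rw [pochR_succ, pochR_succ, pochR_succ, Nat.factorial_succ]
  have h1 := (pochR_pos (by norm_num : (0:ℝ) < 3/2) k).ne'
  have h2 := fact_ne k
  have h3 : ((3:ℝ)/2 + k) ≠ 0 := by positivity
  have h4 : ((k:ℝ)+1) ≠ 0 := by positivity
  push_cast
  field_simp

lemma Aa_mono (k : ℕ) : Aa (k+1) ≤ Aa k := by
  have h := Aa_succ k
  have hk : (0:ℝ) ≤ k := Nat.cast_nonneg k
  have hd : (0:ℝ) < (3/2+(k:ℝ))*((k:ℝ)+1) := by positivity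
  have hn : (1/3+(k:ℝ))*(2/3+(k:ℝ)) ≤ (3/2+(k:ℝ))*((k:ℝ)+1) := by nlinarith
  have h2 : Aa (k+1) * ((3/2+(k:ℝ))*((k:ℝ)+1)) ≤ Aa k * ((3/2+(k:ℝ))*((k:ℝ)+1)) := by
    rw [h]; exact mul_le_mul_of_nonneg_left hn (Aa_pos k).le
  exact le_of_mul_le_mul_right h2 hd

lemma Aa_le_one (k : ℕ) : Aa k ≤ 1 := by
  induction k with
  | zero => rw [Aa_zero]
  | succ k ih => exact (Aa_mono k).trans ih

/-- the key contiguous recurrence -/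
lemma key_rec (k : ℕ) :
    (2*(k:ℝ)+2) * Bb (k+1) = (2*(k:ℝ)+1)^2 * Aa k - Aa k / 9 := by
  have hB := B_eq (k+1)
  have hq := Aa_succ k
  rw [hB]
  push_cast
  linear_combination (4:ℝ) * hq

/- ### bounds -/
lemma Bb_nonneg (k : ℕ) : 0 ≤ Bb k := by
  rw [B_eq]
  have hk : (0:ℝ) ≤ k := Nat.cast_nonneg k
  exact mul_nonneg (by linarith) (Aa_pos k).le

lemma cube_expand (k : ℕ) : ((k:ℝ)+1)^3 = (k:ℝ)^3+3*(k:ℝ)^2+3*(k:ℝ)+1 := by ring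

lemma Bb_le (k : ℕ) : Bb k ≤ 2*(k:ℝ)+1 := by
  rw [B_eq]
  nlinarith [Aa_le_one k, Aa_pos k]

lemma abs_Aa_le (k : ℕ) : |Aa k| ≤ 12 * ((k:ℝ)+1)^3 := by
  rw [abs_of_pos (Aa_pos k), cube_expand]
  have := Aa_le_one k
  have hk : (0:ℝ) ≤ k := Nat.cast_nonneg k
  nlinarith [pow_nonneg hk 3, mul_nonneg hk hk]

lemma abs_Bb_le (k : ℕ) : |Bb k| ≤ 12 * ((k:ℝ)+1)^3 := by
  rw [abs_of_nonneg (Bb_nonneg k), cube_expand]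
  have := Bb_le k
  have hk : (0:ℝ) ≤ k := Nat.cast_nonneg k
  nlinarith [pow_nonneg hk 3, mul_nonneg hk hk]

lemma abs_Bb_mul_le (k : ℕ) : |Bb k * (2*(k:ℝ))| ≤ 12 * ((k:ℝ)+1)^3 := by
  rw [abs_mul, abs_of_nonneg (Bb_nonneg k)]
  have h1 := Bb_le k
  have h2 := Bb_nonneg k
  have hk : (0:ℝ) ≤ k := Nat.cast_nonneg k
  rw [abs_of_nonneg (by positivity : (0:ℝ) ≤ 2*(k:ℝ)), cube_expand]
  nlinarith [pow_nonneg hk 3, mul_nonneg hk hk, mul_le_mul_of_nonneg_right h1 (by positivity : (0:ℝ) ≤ 2*(k:ℝ))]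

lemma abs_Cc_le (k : ℕ) : |Cc k| ≤ 12 * ((k:ℝ)+1)^3 := by
  rw [C_eq, abs_mul, abs_of_nonneg (Bb_nonneg k)]
  have h1 := Bb_le k
  have h2 := Bb_nonneg k
  have hk : (0:ℝ) ≤ k := Nat.cast_nonneg k
  have h3 : |1 - 2*(k:ℝ)| ≤ 2*(k:ℝ)+1 := by
    rw [abs_le]; constructor <;> nlinarith
  calc |1 - 2*(k:ℝ)| * Bb k ≤ (2*(k:ℝ)+1) * (2*(k:ℝ)+1) := by
        nlinarith [abs_nonneg (1 - 2*(k:ℝ))]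
    _ ≤ 12 * ((k:ℝ)+1)^3 := by
        rw [cube_expand]
        nlinarith [pow_nonneg hk 3, mul_nonneg hk hk]

lemma abs_Bbsucc_le (k : ℕ) : |Bb (k+1) * (2*(k:ℝ)+2)| ≤ 12 * ((k:ℝ)+1)^3 := by
  rw [abs_mul, abs_of_nonneg (Bb_nonneg (k+1))]
  have h1 := Bb_le (k+1)
  have h2 := Bb_nonneg (k+1)
  have hk : (0:ℝ) ≤ k := Nat.cast_nonneg k
  push_cast at h1
  rw [abs_of_nonneg (by positivity : (0:ℝ) ≤ 2*(k:ℝ)+2), cube_expand]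
  nlinarith [pow_nonneg hk 3, mul_nonneg hk hk, mul_le_mul_of_nonneg_right h1 (by positivity : (0:ℝ) ≤ 2*(k:ℝ)+2)]


/- ### summability -/

lemma cube_geom_summable {x : ℝ} (hx : |x| < 1) :
    Summable (fun k : ℕ => ((k:ℝ)+1)^3 * x^k) := by
  have hx' : ‖x‖ < 1 := by rwa [Real.norm_eq_abs]
  have h0 : Summable (fun k : ℕ => ((k:ℝ))^0 * x^k) :=
    summable_pow_mul_geometric_of_norm_lt_one 0 hx'
  have h1 : Summable (fun k : ℕ => ((k:ℝ))^1 * x^k) :=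
    summable_pow_mul_geometric_of_norm_lt_one 1 hx'
  have h2 : Summable (fun k : ℕ => ((k:ℝ))^2 * x^k) :=
    summable_pow_mul_geometric_of_norm_lt_one 2 hx'
  have h3 : Summable (fun k : ℕ => ((k:ℝ))^3 * x^k) :=
    summable_pow_mul_geometric_of_norm_lt_one 3 hx'
  exact (h3.add ((h2.mul_left 3).add ((h1.mul_left 3).add h0))).congr fun k => by ring

lemma summable_master {t : ℝ} (ht : |t| < 1) {f : ℕ → ℝ}
    (hf : ∀ k, |f k| ≤ 12 * ((k:ℝ)+1)^3) (m : ℕ → ℕ) (hm : ∀ k, k ≤ m k) :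
    Summable (fun k => f k * t ^ m k) := by
  have habs : |(|t|)| < 1 := by rwa [abs_abs]
  refine Summable.of_norm_bounded ((cube_geom_summable habs).mul_left 12) fun k => ?_
  have h1 : ‖f k * t ^ m k‖ = |f k| * |t| ^ m k := by
    rw [Real.norm_eq_abs, abs_mul, abs_pow]
  rw [h1]
  have h2 : |t| ^ m k ≤ |t| ^ k := pow_le_pow_of_le_one (abs_nonneg t) ht.le (hm k)
  calc |f k| * |t| ^ m k ≤ (12 * ((k:ℝ)+1)^3) * |t| ^ k := by
        have h4 := hf k
        have h5 : (0:ℝ) ≤ |f k| := abs_nonneg _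
        nlinarith [pow_nonneg (abs_nonneg t) (m k), pow_nonneg (abs_nonneg t) k]
    _ = 12 * (((k:ℝ)+1)^3 * |t|^k) := by ring

/- ### the series as functions -/

noncomputable def Uu (t : ℝ) : ℝ := ∑' k : ℕ, Aa k * t^(2*k+1)
noncomputable def Pp (t : ℝ) : ℝ := ∑' k : ℕ, Bb k * t^(2*k)
noncomputable def P2 (t : ℝ) : ℝ := ∑' k : ℕ, Bb k * ((2*k : ℕ) * t^(2*k-1))

lemma summable_U {t : ℝ} (ht : |t| < 1) : Summable (fun k : ℕ => Aa k * t^(2*k+1)) :=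
  summable_master ht abs_Aa_le _ (fun k => by omega)

lemma summable_P {t : ℝ} (ht : |t| < 1) : Summable (fun k : ℕ => Bb k * t^(2*k)) :=
  summable_master ht abs_Bb_le _ (fun k => by omega)

lemma summable_P2 {t : ℝ} (ht : |t| < 1) :
    Summable (fun k : ℕ => Bb k * ((2*k : ℕ) * t^(2*k-1))) := by
  have := summable_master ht (f := fun k => Bb k * (2*(k:ℝ))) abs_Bb_mul_le
    (fun k => 2*k-1) (fun k => by show k ≤ 2*k-1; omega)
  exact this.congr fun k => by push_cast; ring

lemma summable_C {t : ℝ} (ht : |t| < 1) : Summable (fun k : ℕ => Cc k * t^(2*k)) :=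
  summable_master ht abs_Cc_le _ (fun k => by omega)

lemma summable_kB {t : ℝ} (ht : |t| < 1) :
    Summable (fun k : ℕ => (2*(k:ℝ)) * Bb k * t^(2*k)) := by
  have := summable_master ht (f := fun k => Bb k * (2*(k:ℝ))) abs_Bb_mul_le
    (fun k => 2*k) (fun k => by show k ≤ 2*k; omega)
  exact this.congr fun k => by ring

lemma summable_Bsucc {t : ℝ} (ht : |t| < 1) :
    Summable (fun k : ℕ => Bb (k+1) * (2*(k:ℝ)+2) * t^(2*k+1)) := by
  have := summable_master ht (f := fun k => Bb (k+1) * (2*(k:ℝ)+2)) abs_Bbsucc_le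
    (fun k => 2*k+1) (fun k => by show k ≤ 2*k+1; omega)
  exact this.congr fun k => by ring


lemma summable_B1 {t : ℝ} (ht : |t| < 1) :
    Summable (fun k : ℕ => Bb k * t^(2*k+1)) :=
  summable_master ht abs_Bb_le (fun k => 2*k+1) (fun k => by show k ≤ 2*k+1; omega)

lemma summable_kB1 {t : ℝ} (ht : |t| < 1) :
    Summable (fun k : ℕ => (2*(k:ℝ)) * Bb k * t^(2*k+1)) := by
  have := summable_master ht (f := fun k => Bb k * (2*(k:ℝ))) abs_Bb_mul_le
    (fun k => 2*k+1) (fun k => by show k ≤ 2*k+1; omega)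
  exact this.congr fun k => by ring

lemma summable_A9 {t : ℝ} (ht : |t| < 1) :
    Summable (fun k : ℕ => (Aa k / 9) * t^(2*k+1)) :=
  ((summable_U ht).mul_left (1/9)).congr fun k => by ring

lemma P2_eq {t : ℝ} (ht : |t| < 1) : P2 t = (t * Pp t - Uu t / 9) / (1 - t^2) := by
  obtain ⟨hl, hr⟩ := abs_lt.mp ht
  have hpos : (0:ℝ) < 1 - t^2 := by nlinarith
  have h1 : (1:ℝ) - t^2 ≠ 0 := hpos.ne'
  rw [eq_div_iff h1]
  have e1 : P2 t = ∑' k : ℕ, Bb (k+1) * (2*(k:ℝ)+2) * t^(2*k+1) := by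
    rw [P2, Summable.tsum_eq_zero_add (summable_P2 ht)]
    have h0 : Bb 0 * (((2*0 : ℕ):ℝ) * t^(2*0-1)) = 0 := by norm_num
    rw [h0, zero_add]
    refine tsum_congr fun k => ?_
    have h : 2*(k+1)-1 = 2*k+1 := by omega
    rw [h]
    push_cast
    ring
  have e2 : t^2 * P2 t = ∑' k : ℕ, (2*(k:ℝ)) * Bb k * t^(2*k+1) := by
    rw [P2, ← tsum_mul_left]
    refine tsum_congr fun k => ?_
    rcases k with _ | k
    · simp
    · have h : 2*(k+1)-1 = 2*k+1 := by omega
      rw [h]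
      push_cast
      ring
  have e3 : t * Pp t = ∑' k : ℕ, Bb k * t^(2*k+1) := by
    rw [Pp, ← tsum_mul_left]
    exact tsum_congr fun k => by ring
  have e4 : Uu t / 9 = ∑' k : ℕ, (Aa k / 9) * t^(2*k+1) := by
    rw [Uu, ← tsum_div_const]
    exact tsum_congr fun k => by ring
  calc P2 t * (1 - t^2) = P2 t - t^2 * P2 t := by ring
    _ = ∑' k : ℕ, (Bb (k+1) * (2*(k:ℝ)+2) * t^(2*k+1) - (2*(k:ℝ)) * Bb k * t^(2*k+1)) := by
        rw [e2, e1, Summable.tsum_sub (summable_Bsucc ht) (summable_kB1 ht)]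
    _ = ∑' k : ℕ, (Bb k * t^(2*k+1) - (Aa k / 9) * t^(2*k+1)) := by
        refine tsum_congr fun k => ?_
        have hk1 := key_rec k
        have hk2 := B_eq k
        linear_combination t^(2*k+1) * hk1 - (2*(k:ℝ)+1) * t^(2*k+1) * hk2
    _ = t * Pp t - Uu t / 9 := by
        rw [Summable.tsum_sub (summable_B1 ht) (summable_A9 ht), ← e3, ← e4]

lemma Q_eq {t : ℝ} (ht : |t| < 1) :
    ∑' k : ℕ, Cc k * t^(2*k) = Pp t - t * P2 t := by
  have eA : t * P2 t = ∑' k : ℕ, (2*(k:ℝ)) * Bb k * t^(2*k) := by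
    rw [P2, ← tsum_mul_left]
    refine tsum_congr fun k => ?_
    rcases k with _ | k
    · simp
    · have h : 2*(k+1)-1 = 2*k+1 := by omega
      rw [h]
      push_cast
      ring
  rw [eA, Pp, ← Summable.tsum_sub (summable_P ht) (summable_kB ht)]
  exact tsum_congr fun k => by rw [C_eq]; ring

lemma Uu_zero : Uu 0 = 0 := by
  have h : ∀ k : ℕ, Aa k * (0:ℝ)^(2*k+1) = 0 := fun k => by
    rw [zero_pow (by omega : 2*k+1 ≠ 0), mul_zero]
  rw [Uu]
  calc ∑' k : ℕ, Aa k * (0:ℝ)^(2*k+1) = ∑' _ : ℕ, (0:ℝ) := tsum_congr h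
    _ = 0 := tsum_zero

lemma Pp_zero : Pp 0 = 1 := by
  rw [Pp, tsum_eq_single 0 ?_]
  · simp [Bb_zero]
  · intro k hk
    rw [zero_pow (by omega : 2*k ≠ 0), mul_zero]


lemma lin_le_cube (n : ℕ) : 2*(n:ℝ)+1 ≤ 12*((n:ℝ)+1)^3 := by
  have hk : (0:ℝ) ≤ n := Nat.cast_nonneg n
  rw [cube_expand]
  nlinarith [pow_nonneg hk 3, mul_nonneg hk hk]

lemma hu_summable {r : ℝ} (hr0 : 0 < r) (hr1 : r < 1) :
    Summable (fun n : ℕ => 12*((n:ℝ)+1)^3 * r^n) := by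
  have : |r| < 1 := by rw [abs_of_pos hr0]; exact hr1
  exact ((cube_geom_summable this).mul_left 12).congr fun n => by ring

lemma hasDerivAt_Uu {y : ℝ} (hy : |y| < 1) : HasDerivAt Uu (Pp y) y := by
  have hy0 : (0:ℝ) ≤ |y| := abs_nonneg y
  set r : ℝ := (1 + |y|)/2 with hrdef
  have hr1 : r < 1 := by rw [hrdef]; linarith
  have hr0 : 0 < r := by rw [hrdef]; linarith
  have hyr : |y| < r := by rw [hrdef]; linarith
  have hmem : y ∈ Set.Ioo (-r) r := by
    obtain ⟨h1, h2⟩ := abs_lt.mp hyr; exact ⟨h1, h2⟩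
  have h0mem : (0:ℝ) ∈ Set.Ioo (-r) r := ⟨by linarith, hr0⟩
  have hD := hasDerivAt_tsum_of_isPreconnected
    (u := fun n : ℕ => 12*((n:ℝ)+1)^3 * r^n)
    (g := fun (n : ℕ) (t : ℝ) => Aa n * t^(2*n+1))
    (g' := fun (n : ℕ) (t : ℝ) => Aa n * (((2*n+1 : ℕ) : ℝ) * t^(2*n)))
    (hu_summable hr0 hr1) isOpen_Ioo (convex_Ioo _ _).isPreconnected
    (fun n t _ => by
      have h := (hasDerivAt_pow (2*n+1) t).const_mul (Aa n)
      simpa only [Nat.add_sub_cancel] using h)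
    (fun n t ht => by
      have h1 : |t| < r := abs_lt.mpr ⟨ht.1, ht.2⟩
      rw [Real.norm_eq_abs, abs_mul, abs_mul, abs_pow, abs_of_pos (Aa_pos n),
        abs_of_nonneg (by positivity : (0:ℝ) ≤ ((2*n+1 : ℕ) : ℝ))]
      have hb1 : |t|^(2*n) ≤ r^n :=
        le_trans (pow_le_pow_left₀ (abs_nonneg t) h1.le _)
          (pow_le_pow_of_le_one hr0.le hr1.le (by omega))
      have hb3 := lin_le_cube n
      have hc : ((2*n+1 : ℕ) : ℝ) = 2*(n:ℝ)+1 := by push_cast; ring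
      rw [hc]
      have hmm : (2*(n:ℝ)+1) * |t|^(2*n) ≤ (12*((n:ℝ)+1)^3) * r^n :=
        mul_le_mul hb3 hb1 (pow_nonneg (abs_nonneg t) _) (by positivity)
      show Aa n * ((2*(n:ℝ)+1) * |t|^(2*n)) ≤ 12*((n:ℝ)+1)^3 * r^n
      nlinarith [Aa_le_one n, Aa_pos n,
        mul_nonneg (by positivity : (0:ℝ) ≤ 2*(n:ℝ)+1) (pow_nonneg (abs_nonneg t) (2*n))])
    h0mem (summable_U (by norm_num)) hmem
  have hval : (∑' n : ℕ, Aa n * (((2*n+1 : ℕ) : ℝ) * y^(2*n))) = Pp y := by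
    rw [Pp]
    refine tsum_congr fun n => ?_
    rw [B_eq]
    push_cast
    ring
  rw [hval] at hD
  exact hD

lemma hasDerivAt_Pp {y : ℝ} (hy : |y| < 1) : HasDerivAt Pp (P2 y) y := by
  have hy0 : (0:ℝ) ≤ |y| := abs_nonneg y
  set r : ℝ := (1 + |y|)/2 with hrdef
  have hr1 : r < 1 := by rw [hrdef]; linarith
  have hr0 : 0 < r := by rw [hrdef]; linarith
  have hyr : |y| < r := by rw [hrdef]; linarith
  have hmem : y ∈ Set.Ioo (-r) r := by
    obtain ⟨h1, h2⟩ := abs_lt.mp hyr; exact ⟨h1, h2⟩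
  have h0mem : (0:ℝ) ∈ Set.Ioo (-r) r := ⟨by linarith, hr0⟩
  have hD := hasDerivAt_tsum_of_isPreconnected
    (u := fun n : ℕ => 12*((n:ℝ)+1)^3 * r^n)
    (g := fun (n : ℕ) (t : ℝ) => Bb n * t^(2*n))
    (g' := fun (n : ℕ) (t : ℝ) => Bb n * (((2*n : ℕ) : ℝ) * t^(2*n-1)))
    (hu_summable hr0 hr1) isOpen_Ioo (convex_Ioo _ _).isPreconnected
    (fun n t _ => (hasDerivAt_pow (2*n) t).const_mul (Bb n))
    (fun n t ht => by
      beta_reduce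
      have h1 : |t| < r := abs_lt.mpr ⟨ht.1, ht.2⟩
      rcases n with _ | n
      · beta_reduce
        norm_num
      · rw [Real.norm_eq_abs, abs_mul, abs_mul, abs_pow, abs_of_nonneg (Bb_nonneg (n+1)),
          abs_of_nonneg (by positivity : (0:ℝ) ≤ ((2*(n+1) : ℕ) : ℝ))]
        have hb1 : |t|^(2*(n+1)-1) ≤ r^(n+1) :=
          le_trans (pow_le_pow_left₀ (abs_nonneg t) h1.le _)
            (pow_le_pow_of_le_one hr0.le hr1.le (by omega))
        have hBle := Bb_le (n+1)
        have hBnn := Bb_nonneg (n+1)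
        have hc : ((2*(n+1) : ℕ) : ℝ) = 2*((n:ℝ)+1) := by push_cast; ring
        rw [hc]
        have hcube : 2*((n:ℝ)+1)+1 ≤ 12*(((n+1 : ℕ):ℝ)+1)^3 := by
          have := lin_le_cube (n+1); push_cast at this ⊢; linarith
        push_cast at hBle
        -- goal : Bb (n+1) * (2*((n:ℝ)+1) * |t| ^ (2*(n+1)-1)) ≤ 12*(((n+1:ℕ):ℝ)+1)^3 * r^(n+1)
        push_cast
        have hmm : (2*((n:ℝ)+1)) * |t|^(2*(n+1)-1) ≤ (2*((n:ℝ)+1)) * r^(n+1) :=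
          mul_le_mul_of_nonneg_left hb1 (by positivity)
        have hrp : (0:ℝ) ≤ r^(n+1) := by positivity
        have h2n : 2*(n+1)-1 = 2*n+1 := by omega
        rw [h2n] at hmm ⊢
        nlinarith [pow_nonneg (abs_nonneg t) (2*n+1), mul_nonneg hrp
          (by positivity : (0:ℝ) ≤ 2*((n:ℝ)+1)),
          mul_le_mul_of_nonneg_right hBle hrp,
          mul_nonneg hBnn (pow_nonneg (abs_nonneg t) (2*n+1)),
          sq_nonneg ((n:ℝ)+1), Nat.cast_nonneg (α := ℝ) n])
    h0mem (summable_P (by norm_num)) hmem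
  exact hD


noncomputable def Vv (t : ℝ) : ℝ := 3 * Real.sin (Real.arcsin t / 3)
noncomputable def Ww (t : ℝ) : ℝ := Real.cos (Real.arcsin t / 3) / Real.sqrt (1 - t^2)

lemma sqrt_pos_of_abs {t : ℝ} (h : |t| < 1) : 0 < Real.sqrt (1 - t^2) := by
  obtain ⟨h1, h2⟩ := abs_lt.mp h
  apply Real.sqrt_pos.mpr
  nlinarith

lemma hasDerivAt_arcsin3 {t : ℝ} (h : |t| < 1) :
    HasDerivAt (fun x => Real.arcsin x / 3) (1 / Real.sqrt (1 - t^2) / 3) t := by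
  obtain ⟨h1, h2⟩ := abs_lt.mp h
  exact (Real.hasDerivAt_arcsin h1.ne' h2.ne).div_const 3

lemma hasDerivAt_Vv {t : ℝ} (h : |t| < 1) : HasDerivAt Vv (Ww t) t := by
  have h3 := hasDerivAt_arcsin3 h
  have h4 := ((Real.hasDerivAt_sin (Real.arcsin t / 3)).comp t h3).const_mul 3
  have hs := sqrt_pos_of_abs h
  have : 3 * (Real.cos (Real.arcsin t / 3) * (1 / Real.sqrt (1 - t^2) / 3)) = Ww t := by
    rw [Ww]; field_simp
  rw [this] at h4
  exact h4

lemma hasDerivAt_Ww {t : ℝ} (h : |t| < 1) :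
    HasDerivAt Ww ((t * Ww t - Vv t / 9) / (1 - t^2)) t := by
  obtain ⟨h1, h2⟩ := abs_lt.mp h
  have hpos : (0:ℝ) < 1 - t^2 := by nlinarith
  have hs := sqrt_pos_of_abs h
  have hs2 : Real.sqrt (1 - t^2)^2 = 1 - t^2 := Real.sq_sqrt hpos.le
  have h3 := hasDerivAt_arcsin3 h
  have hc : HasDerivAt (fun x => Real.cos (Real.arcsin x / 3))
      (-Real.sin (Real.arcsin t / 3) * (1 / Real.sqrt (1 - t^2) / 3)) t :=
    by have := (Real.hasDerivAt_cos (Real.arcsin t / 3)).comp t h3; exact this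
  have hu : HasDerivAt (fun x : ℝ => 1 - x^2) (-(2*t)) t := by
    have := (hasDerivAt_pow 2 t).const_sub 1
    simpa using this
  have hq : HasDerivAt (fun x => Real.sqrt (1 - x^2))
      (1 / (2 * Real.sqrt (1 - t^2)) * (-(2*t))) t :=
    (Real.hasDerivAt_sqrt hpos.ne').comp t hu
  have hdiv := hc.div hq hs.ne'
  have heq : (-Real.sin (Real.arcsin t / 3) * (1 / Real.sqrt (1 - t^2) / 3) *
        Real.sqrt (1 - t^2) -
        Real.cos (Real.arcsin t / 3) * (1 / (2 * Real.sqrt (1 - t^2)) * (-(2*t)))) /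
        (Real.sqrt (1 - t^2))^2
      = (t * Ww t - Vv t / 9) / (1 - t^2) := by
    rw [Ww, Vv]
    field_simp
    ring_nf
    have e3 : Real.sqrt (1 - t ^ 2) ^ 3 = Real.sqrt (1 - t ^ 2) ^ 2 * Real.sqrt (1 - t ^ 2) := by ring
    rw [e3, hs2]
    ring
  rw [heq] at hdiv
  exact hdiv


lemma Vv_zero : Vv 0 = 0 := by simp [Vv, Real.arcsin_zero]
lemma Ww_zero : Ww 0 = 1 := by simp [Ww, Real.arcsin_zero, Real.sqrt_one]

lemma UP_eq {t : ℝ} (h : |t| < 1) : Uu t = Vv t ∧ Pp t = Ww t := by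
  have ht0 : (0:ℝ) ≤ |t| := abs_nonneg t
  set r : ℝ := (1 + |t|)/2 with hrdef
  have hr1 : r < 1 := by rw [hrdef]; linarith
  have hr0 : 0 < r := by rw [hrdef]; linarith
  have htr : |t| < r := by rw [hrdef]; linarith
  have hmem : t ∈ Set.Ioo (-r) r := by
    obtain ⟨a, b⟩ := abs_lt.mp htr; exact ⟨a, b⟩
  have h0mem : (0:ℝ) ∈ Set.Ioo (-r) r := ⟨by linarith, hr0⟩
  have hrr : (0:ℝ) < 1 - r^2 := by nlinarith
  set τ : ℝ → ℝ := fun s => max (-r) (min r s) with hτdef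
  have hτ_abs : ∀ s, |τ s| ≤ r := by
    intro s
    rw [abs_le]
    constructor
    · exact le_max_left _ _
    · exact max_le (by linarith) (min_le_left _ _)
  have hτ_eq : ∀ s ∈ Set.Ioo (-r) r, τ s = s := by
    intro s hs
    rw [hτdef]
    simp only
    rw [min_eq_right hs.2.le, max_eq_right hs.1.le]
  set K0 : ℝ := 1 + (r + 1/9)/(1 - r^2) with hK0def
  have hK0 : (1:ℝ) ≤ K0 := by
    rw [hK0def]
    have : 0 ≤ (r + 1/9)/(1-r^2) := by positivity
    linarith
  set v : ℝ → ℝ × ℝ → ℝ × ℝ :=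
    fun s y => (y.2, (τ s * y.2 - y.1/9)/(1 - (τ s)^2)) with hvdef
  have hlip : ∀ s, LipschitzOnWith K0.toNNReal (v s) Set.univ := by
    intro s
    apply LipschitzWith.lipschitzOnWith
    apply LipschitzWith.of_dist_le_mul
    intro y z
    have hcoe : (K0.toNNReal : ℝ) = K0 := Real.coe_toNNReal _ (by linarith)
    rw [hcoe, Prod.dist_eq]
    have hD0 : 0 ≤ dist y z := dist_nonneg
    have hd1 : dist y.1 z.1 ≤ dist y z := by rw [Prod.dist_eq]; exact le_max_left _ _
    have hd2 : dist y.2 z.2 ≤ dist y z := by rw [Prod.dist_eq]; exact le_max_right _ _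
    have c1 : |y.1 - z.1| ≤ dist y z := by rw [← Real.dist_eq]; exact hd1
    have c2 : |y.2 - z.2| ≤ dist y z := by rw [← Real.dist_eq]; exact hd2
    apply max_le
    · calc dist (v s y).1 (v s z).1 = dist y.2 z.2 := rfl
        _ ≤ dist y z := hd2
        _ ≤ K0 * dist y z := by nlinarith
    · have ha : |τ s| ≤ r := hτ_abs s
      have hsq : (τ s)^2 ≤ r^2 := by
        rw [← sq_abs]
        exact pow_le_pow_left₀ (abs_nonneg _) ha 2
      have hden : 1 - r^2 ≤ 1 - (τ s)^2 := by linarith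
      have hdenpos : 0 < 1 - (τ s)^2 := lt_of_lt_of_le hrr hden
      have hnumeq : (τ s * y.2 - y.1/9) - (τ s * z.2 - z.1/9)
          = τ s * (y.2 - z.2) - (y.1 - z.1)/9 := by ring
      have hq : (r + 1/9)/(1-r^2) ≤ K0 := by rw [hK0def]; linarith
      calc dist (v s y).2 (v s z).2
          = |(τ s * y.2 - y.1/9)/(1 - (τ s)^2) - (τ s * z.2 - z.1/9)/(1 - (τ s)^2)| := by
            rw [Real.dist_eq]
        _ = |τ s * (y.2 - z.2) - (y.1 - z.1)/9| / (1 - (τ s)^2) := by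
            rw [div_sub_div_same, hnumeq, abs_div, abs_of_pos hdenpos]
        _ ≤ (r * dist y z + dist y z / 9) / (1 - r^2) := by
            apply div_le_div₀ (by positivity) ?_ hrr hden
            calc |τ s * (y.2 - z.2) - (y.1 - z.1)/9|
                ≤ |τ s * (y.2 - z.2)| + |(y.1 - z.1)/9| := abs_sub _ _
              _ = |τ s| * |y.2 - z.2| + |y.1 - z.1|/9 := by
                  rw [abs_mul, abs_div, abs_of_pos (by norm_num : (0:ℝ) < 9)]
              _ ≤ r * dist y z + dist y z / 9 := by
                  have := mul_le_mul ha c2 (abs_nonneg _) hr0.le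
                  linarith
        _ = dist y z * ((r + 1/9)/(1 - r^2)) := by field_simp
        _ ≤ dist y z * K0 := mul_le_mul_of_nonneg_left hq hD0
        _ = K0 * dist y z := mul_comm _ _
  have habs1 : ∀ s ∈ Set.Ioo (-r) r, |s| < 1 := fun s hs => by
    rw [abs_lt]; exact ⟨by linarith [hs.1], by linarith [hs.2]⟩
  have hf : ∀ s ∈ Set.Ioo (-r) r,
      HasDerivAt (fun q => (Uu q, Pp q)) (v s (Uu s, Pp s)) s ∧
        (Uu s, Pp s) ∈ Set.univ := by
    intro s hs
    refine ⟨?_, trivial⟩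
    have h1 : |s| < 1 := habs1 s hs
    have hU := hasDerivAt_Uu h1
    have hP := hasDerivAt_Pp h1
    rw [P2_eq h1] at hP
    have hprod := hU.prodMk hP
    have hveq : v s (Uu s, Pp s) = (Pp s, (s * Pp s - Uu s / 9)/(1 - s^2)) := by
      rw [hvdef]; simp only; rw [hτ_eq s hs]
    rw [hveq]
    exact hprod
  have hg : ∀ s ∈ Set.Ioo (-r) r,
      HasDerivAt (fun q => (Vv q, Ww q)) (v s (Vv s, Ww s)) s ∧
        (Vv s, Ww s) ∈ Set.univ := by
    intro s hs
    refine ⟨?_, trivial⟩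
    have h1 : |s| < 1 := habs1 s hs
    have hV := hasDerivAt_Vv h1
    have hW := hasDerivAt_Ww h1
    have hprod := hV.prodMk hW
    have hveq : v s (Vv s, Ww s) = (Ww s, (s * Ww s - Vv s / 9)/(1 - s^2)) := by
      rw [hvdef]; simp only; rw [hτ_eq s hs]
    rw [hveq]
    exact hprod
  have heq0 : (fun q => (Uu q, Pp q)) 0 = (fun q => (Vv q, Ww q)) 0 := by
    simp only
    rw [Uu_zero, Pp_zero, Vv_zero, Ww_zero]
  have key := ODE_solution_unique_of_mem_Ioo (s := fun _ => Set.univ) (fun s _ => hlip s) h0mem hf hg heq0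
  have hkey := key hmem
  simp only [Prod.mk.injEq] at hkey
  exact hkey

end Hyp

open Hyp

theorem hyp2F1_third_twothirds_neghalf (z : ℝ) (hz0 : 0 < z) (hz1 : z < 1) :
    hyp2F1R (1/3) (2/3) (-1/2) z =
      ((3 - 6 * z) * Real.cos ((1/3) * Real.arcsin (Real.sqrt z)) +
        Real.sqrt (z * (1 - z)) * Real.sin ((1/3) * Real.arcsin (Real.sqrt z))) /
      (3 * (1 - z) ^ ((3 : ℝ)/2)) := by
  set t := Real.sqrt z with htdef
  have ht0 : 0 < t := Real.sqrt_pos.mpr hz0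
  have ht2 : t^2 = z := Real.sq_sqrt hz0.le
  have ht1 : t < 1 := by
    nlinarith
  have habs : |t| < 1 := by rw [abs_of_pos ht0]; exact ht1
  have step1 : hyp2F1R (1/3) (2/3) (-1/2) z = ∑' k : ℕ, Cc k * t^(2*k) := by
    rw [hyp2F1R]
    refine tsum_congr fun k => ?_
    rw [Cc, pow_mul, ht2]
  obtain ⟨hUV, hPW⟩ := UP_eq habs
  have step2 : hyp2F1R (1/3) (2/3) (-1/2) z
      = Ww t - t * ((t * Ww t - Vv t / 9) / (1 - t^2)) := by
    rw [step1, Q_eq habs, P2_eq habs, hUV, hPW]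
  rw [step2, Vv, Ww]
  -- now pure algebra
  set w := Real.sqrt (1 - z) with hwdef
  have hw0 : 0 < w := Real.sqrt_pos.mpr (by linarith)
  have hw2 : w^2 = 1 - z := Real.sq_sqrt (by linarith)
  have e1 : (1:ℝ) - t^2 = 1 - z := by rw [ht2]
  have e2 : Real.sqrt (z * (1-z)) = t * w := by
    rw [hwdef, htdef, ← Real.sqrt_mul hz0.le]
  have e3 : (1 - z) ^ ((3:ℝ)/2) = w^3 := by
    rw [hwdef, Real.sqrt_eq_rpow, ← Real.rpow_natCast ((1-z) ^ ((1:ℝ)/(2:ℝ))) 3,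
      ← Real.rpow_mul (by linarith : (0:ℝ) ≤ 1 - z)]
    norm_num
  have e4 : (1/3 : ℝ) * Real.arcsin t = Real.arcsin t / 3 := by ring
  rw [e1, e2, e3, e4]
  set S := Real.sin (Real.arcsin t / 3)
  set C := Real.cos (Real.arcsin t / 3)
  rw [← hwdef]
  have ht2' : t^2 = 1 - w^2 := by rw [ht2]; linarith
  have hz3 : (3:ℝ) - 6*z = 6*w^2 - 3 := by rw [hw2]; ring
  have hz1' : (1:ℝ) - z = w^2 := hw2.symm
  rw [hz3, hz1']
  field_simp
  linear_combination (-(27:ℝ) * C) * ht2'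
end

section
/- Whipple's sum evaluation: ₃F₂(1/4, 1/2, 3/4; 2/3, 4/3; 1) = 4/3, i.e. ∑_{k≥0} ((1/4)_k (1/2)_k (3/4)_k / ((2/3)_k (4/3)_k)) / k! = 4/3. -/
open scoped BigOperators

noncomputable def fcA (r n : ℕ) : ℝ :=
  if r = 0 then (if n = 0 then 1 else 0)
  else r * (Nat.factorial (4*n+r-1)) / (Nat.factorial n * Nat.factorial (3*n+r))

lemma fcA_succ (r n : ℕ) :
    fcA (r+1) n = ((r:ℝ)+1) * (Nat.factorial (4*n+r)) /
      (Nat.factorial n * Nat.factorial (3*n+(r+1))) := by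
  unfold fcA
  rw [if_neg (Nat.succ_ne_zero r)]
  push_cast
  rfl

lemma fcA_zero_right (r : ℕ) : fcA r 0 = 1 := by
  cases r with
  | zero => simp [fcA]
  | succ r =>
    rw [fcA_succ]
    simp only [Nat.mul_zero, Nat.zero_add, Nat.factorial_one]
    rw [Nat.factorial_succ]
    have : (Nat.factorial r : ℝ) ≠ 0 := Nat.cast_ne_zero.2 (Nat.factorial_ne_zero r)
    push_cast
    field_simp
    simp

lemma fcA_rec (r n : ℕ) : fcA (r+1) (n+1) = fcA r (n+1) + fcA (r+4) n := by
  cases r with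
  | zero =>
    have h0 : fcA 0 (n+1) = 0 := by
      simp [fcA]
    rw [h0, fcA_succ, show (4:ℕ) = 3+1 from rfl, fcA_succ]
    have e1 : 4*(n+1)+0 = (4*n+3)+1 := by omega
    have e2 : 3*(n+1)+(0+1) = (3*n+3)+1 := by omega
    have e3 : 3*n+(3+1) = (3*n+3)+1 := by omega
    rw [e1, e2, e3, Nat.factorial_succ (4*n+3), Nat.factorial_succ (3*n+3),
      Nat.factorial_succ n]
    have hf1 : ((4*n+3).factorial : ℝ) ≠ 0 := Nat.cast_ne_zero.2 (Nat.factorial_ne_zero _)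
    have hf2 : ((3*n+3).factorial : ℝ) ≠ 0 := Nat.cast_ne_zero.2 (Nat.factorial_ne_zero _)
    have hf3 : ((n).factorial : ℝ) ≠ 0 := Nat.cast_ne_zero.2 (Nat.factorial_ne_zero _)
    push_cast
    field_simp
    ring
  | succ r =>
    rw [fcA_succ (r+1) (n+1), fcA_succ r (n+1)]
    have h4 : fcA (r+1+4) n = fcA ((r+4)+1) n := by norm_num
    rw [h4, fcA_succ (r+4) n]
    have e1 : 4*(n+1)+(r+1) = ((4*n+r)+4)+1 := by omega
    have e2 : 3*(n+1)+(r+1+1) = ((3*n+r)+4)+1 := by omega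
    have e3 : 4*(n+1)+r = (4*n+r)+4 := by omega
    have e4 : 3*(n+1)+(r+1) = ((3*n+r)+3)+1 := by omega
    have e5 : 4*n+(r+4) = (4*n+r)+4 := by omega
    have e6 : 3*n+(r+4+1) = ((3*n+r)+4)+1 := by omega
    have e7 : (4*n+r)+4 = ((4*n+r)+3)+1 := by omega
    rw [e1, e2, e3, e4, e5, e6, e7]
    rw [Nat.factorial_succ (((4*n+r)+3)+1), Nat.factorial_succ ((4*n+r)+3),
      Nat.factorial_succ ((3*n+r)+4), Nat.factorial_succ ((3*n+r)+3),
      Nat.factorial_succ n]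
    have hf1 : (((4*n+r)+3).factorial : ℝ) ≠ 0 := Nat.cast_ne_zero.2 (Nat.factorial_ne_zero _)
    have hf2 : (((3*n+r)+3).factorial : ℝ) ≠ 0 := Nat.cast_ne_zero.2 (Nat.factorial_ne_zero _)
    have hf3 : ((n).factorial : ℝ) ≠ 0 := Nat.cast_ne_zero.2 (Nat.factorial_ne_zero _)
    push_cast
    field_simp
    ring

lemma fcA_conv : ∀ (n r s : ℕ),
    ∑ i ∈ Finset.range (n+1), fcA r i * fcA s (n-i) = fcA (r+s) n := by
  intro n
  induction n using Nat.strong_induction_on with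
  | _ n ih =>
    rcases n with _ | m
    · intro r s
      simp [fcA_zero_right]
    · intro r s
      induction s with
      | zero =>
        rw [Finset.sum_eq_single (m+1)]
        · simp [fcA_zero_right]
        · intro i hi hne
          have h1 : m + 1 - i ≠ 0 := by
            simp only [Finset.mem_range] at hi
            omega
          have h2 : fcA 0 (m+1-i) = 0 := by simp [fcA, h1]
          rw [h2, mul_zero]
        · intro h
          exact absurd (Finset.self_mem_range_succ (m+1)) h
      | succ s ihs =>
        have key : ∀ i ∈ Finset.range (m+1),
            fcA r i * fcA (s+1) (m+1-i)
              = fcA r i * fcA s (m+1-i) + fcA r i * fcA (s+4) (m-i) := by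
          intro i hi
          simp only [Finset.mem_range] at hi
          have e : m + 1 - i = (m - i) + 1 := by omega
          rw [e, fcA_rec s (m-i)]
          ring
        rw [Finset.sum_range_succ, Finset.sum_congr rfl key, Finset.sum_add_distrib]
        have h2 : ∑ i ∈ Finset.range (m+1), fcA r i * fcA (s+4) (m-i)
            = fcA (r+(s+4)) m := ih m (Nat.lt_succ_self m) r (s+4)
        have h3 : ∑ i ∈ Finset.range (m+1), fcA r i * fcA s (m+1-i)
            = fcA (r+s) (m+1) - fcA r (m+1) * fcA s 0 := by
          have := ihs
          rw [Finset.sum_range_succ] at this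
          have e0 : m + 1 - (m+1) = 0 := by omega
          rw [e0] at this
          linarith
        rw [h2, h3, Nat.sub_self, fcA_zero_right, fcA_zero_right]
        have h4 : fcA ((r+s)+1) (m+1) = fcA (r+s) (m+1) + fcA ((r+s)+4) m :=
          fcA_rec (r+s) m
        have e1 : r + (s+1) = (r+s)+1 := by omega
        have e2 : r + (s+4) = (r+s)+4 := by omega
        rw [e1, e2, h4]
        ring

lemma pochR_pos {a : ℝ} (ha : 0 < a) (k : ℕ) : 0 < pochR a k :=
  Finset.prod_pos fun i _ => by positivity

lemma pochR_succ (a : ℝ) (k : ℕ) : pochR a (k+1) = pochR a k * (a + k) :=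
  Finset.prod_range_succ _ _

lemma fcA_one (k : ℕ) :
    fcA 1 k = (Nat.factorial (4*k) : ℝ) / (Nat.factorial k * Nat.factorial (3*k+1)) := by
  rw [show (1:ℕ) = 0+1 from rfl, fcA_succ]
  norm_num

lemma fcA_one_succ (k : ℕ) :
    fcA 1 (k+1) * (((k:ℝ)+1) * (3*(k:ℝ)+2) * (3*(k:ℝ)+3) * (3*(k:ℝ)+4))
      = fcA 1 k * ((4*(k:ℝ)+1) * (4*(k:ℝ)+2) * (4*(k:ℝ)+3) * (4*(k:ℝ)+4)) := by
  rw [fcA_one, fcA_one]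
  have e1 : 4*(k+1) = (((4*k+1)+1)+1)+1 := by omega
  have e2 : 3*(k+1)+1 = ((3*k+1)+1)+1+1 := by omega
  rw [e1, e2, Nat.factorial_succ ((((4*k+1))+1)+1), Nat.factorial_succ ((4*k+1)+1),
    Nat.factorial_succ (4*k+1), Nat.factorial_succ (4*k),
    Nat.factorial_succ (((3*k+1)+1)+1), Nat.factorial_succ ((3*k+1)+1),
    Nat.factorial_succ (3*k+1), Nat.factorial_succ k]
  have hf1 : ((4*k).factorial : ℝ) ≠ 0 := Nat.cast_ne_zero.2 (Nat.factorial_ne_zero _)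
  have hf2 : ((3*k+1).factorial : ℝ) ≠ 0 := Nat.cast_ne_zero.2 (Nat.factorial_ne_zero _)
  have hf3 : ((k).factorial : ℝ) ≠ 0 := Nat.cast_ne_zero.2 (Nat.factorial_ne_zero _)
  push_cast
  field_simp
  ring

lemma term_eq (k : ℕ) :
    pochR (1/4) k * pochR (1/2) k * pochR (3/4) k /
      (pochR (2/3) k * pochR (4/3) k * (k.factorial : ℝ))
    = fcA 1 k * (27/256)^k := by
  induction k with
  | zero => simp [pochR, fcA_zero_right]
  | succ k ih =>
    have p1 := pochR_pos (show (0:ℝ) < 1/4 by norm_num) k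
    have p2 := pochR_pos (show (0:ℝ) < 1/2 by norm_num) k
    have p3 := pochR_pos (show (0:ℝ) < 3/4 by norm_num) k
    have p4 := pochR_pos (show (0:ℝ) < 2/3 by norm_num) k
    have p5 := pochR_pos (show (0:ℝ) < 4/3 by norm_num) k
    have hfk : (0:ℝ) < (k.factorial : ℝ) := by
      exact_mod_cast Nat.factorial_pos k
    have hA : (((k:ℝ)+1) * (3*(k:ℝ)+2) * (3*(k:ℝ)+3) * (3*(k:ℝ)+4)) ≠ 0 := by positivity
    have h := fcA_one_succ k
    have key2 : (fcA 1 (k+1) * (27/256:ℝ)^(k+1)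
          * ((2/3+(k:ℝ)) * (4/3+(k:ℝ)) * ((k:ℝ)+1)))
          * (((k:ℝ)+1) * (3*(k:ℝ)+2) * (3*(k:ℝ)+3) * (3*(k:ℝ)+4))
        = (fcA 1 k * (27/256:ℝ)^k
          * ((1/4+(k:ℝ)) * (1/2+(k:ℝ)) * (3/4+(k:ℝ))))
          * (((k:ℝ)+1) * (3*(k:ℝ)+2) * (3*(k:ℝ)+3) * (3*(k:ℝ)+4)) := by
      rw [pow_succ]
      linear_combination ((27/256:ℝ)^k * (27/256) *
        ((2/3+(k:ℝ)) * (4/3+(k:ℝ)) * ((k:ℝ)+1))) * h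
    have key := mul_right_cancel₀ hA key2
    rw [pochR_succ, pochR_succ, pochR_succ, pochR_succ, pochR_succ, Nat.factorial_succ]
    rw [← ih] at key
    push_cast
    rw [div_eq_iff (by positivity)]
    rw [div_mul_eq_mul_div, eq_div_iff (by positivity)] at key
    linear_combination -key

noncomputable def wtm (k : ℕ) : ℝ :=
  pochR (1/4) k * pochR (1/2) k * pochR (3/4) k /
    (pochR (2/3) k * pochR (4/3) k * (k.factorial : ℝ))

lemma wtm_pos (k : ℕ) : 0 < wtm k := by
  have p1 := pochR_pos (show (0:ℝ) < 1/4 by norm_num) k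
  have p2 := pochR_pos (show (0:ℝ) < 1/2 by norm_num) k
  have p3 := pochR_pos (show (0:ℝ) < 3/4 by norm_num) k
  have p4 := pochR_pos (show (0:ℝ) < 2/3 by norm_num) k
  have p5 := pochR_pos (show (0:ℝ) < 4/3 by norm_num) k
  have hfk : (0:ℝ) < (k.factorial : ℝ) := by exact_mod_cast Nat.factorial_pos k
  exact div_pos (by positivity) (by positivity)

lemma wtm_succ (k : ℕ) :
    wtm (k+1) = wtm k *
      (((1/4+(k:ℝ)) * (1/2+(k:ℝ)) * (3/4+(k:ℝ))) /
        ((2/3+(k:ℝ)) * (4/3+(k:ℝ)) * ((k:ℝ)+1))) := by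
  have p1 := pochR_pos (show (0:ℝ) < 1/4 by norm_num) k
  have p2 := pochR_pos (show (0:ℝ) < 1/2 by norm_num) k
  have p3 := pochR_pos (show (0:ℝ) < 3/4 by norm_num) k
  have p4 := pochR_pos (show (0:ℝ) < 2/3 by norm_num) k
  have p5 := pochR_pos (show (0:ℝ) < 4/3 by norm_num) k
  have hfk : (0:ℝ) < (k.factorial : ℝ) := by exact_mod_cast Nat.factorial_pos k
  unfold wtm
  rw [pochR_succ, pochR_succ, pochR_succ, pochR_succ, pochR_succ, Nat.factorial_succ]
  push_cast
  field_simp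

lemma wtm_bound (k : ℕ) : wtm k ≤ 1 / (((k:ℝ)+1) * Real.sqrt ((k:ℝ)+1)) := by
  induction k with
  | zero => simp [wtm, pochR]
  | succ k ih =>
    have hk : (0:ℝ) ≤ (k:ℝ) := Nat.cast_nonneg k
    set t : ℝ := (k:ℝ) with ht
    have hs : (0:ℝ) < Real.sqrt (t+1) := Real.sqrt_pos.2 (by linarith)
    have hu : (0:ℝ) < Real.sqrt (t+2) := Real.sqrt_pos.2 (by linarith)
    have hs2 : (Real.sqrt (t+1))^2 = t+1 := Real.sq_sqrt (by linarith)
    have hu2 : (Real.sqrt (t+2))^2 = t+2 := Real.sq_sqrt (by linarith)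
    -- the ratio
    set ρ : ℝ := ((1/4+t) * (1/2+t) * (3/4+t)) / ((2/3+t) * (4/3+t) * (t+1)) with hρ
    have hρpos : 0 < ρ := by positivity
    -- squared inequality : ρ^2 * (t+2)^3 ≤ (t+1)^3
    have hsq : ρ^2 * (t+2)^3 ≤ (t+1)^3 := by
      rw [hρ, div_pow, div_mul_eq_mul_div, div_le_iff₀ (by positivity)]
      nlinarith [sq_nonneg t, pow_nonneg hk 3, pow_nonneg hk 4, pow_nonneg hk 5,
        pow_nonneg hk 6, pow_nonneg hk 7, hk]
    -- hence ρ * (t+2) * √(t+2) ≤ (t+1) * √(t+1)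
    have hmain : ρ * ((t+2) * Real.sqrt (t+2)) ≤ (t+1) * Real.sqrt (t+1) := by
      have h1 : (ρ * ((t+2) * Real.sqrt (t+2)))^2 ≤ ((t+1) * Real.sqrt (t+1))^2 := by
        have e1 : (ρ * ((t+2) * Real.sqrt (t+2)))^2 = ρ^2 * (t+2)^2 * (t+2) := by
          rw [mul_pow, mul_pow, hu2]; ring
        have e2 : ((t+1) * Real.sqrt (t+1))^2 = (t+1)^2 * (t+1) := by
          rw [mul_pow, hs2]
        rw [e1, e2]
        calc ρ^2 * (t+2)^2 * (t+2) = ρ^2 * (t+2)^3 := by ring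
          _ ≤ (t+1)^3 := hsq
          _ = (t+1)^2 * (t+1) := by ring
      have ha : (0:ℝ) ≤ ρ * ((t+2) * Real.sqrt (t+2)) := by positivity
      have hb : (0:ℝ) ≤ (t+1) * Real.sqrt (t+1) := by positivity
      nlinarith [h1, ha, hb]
    rw [wtm_succ]
    have step : wtm k * ρ ≤ (1 / ((t+1) * Real.sqrt (t+1))) * ρ :=
      mul_le_mul_of_nonneg_right ih hρpos.le
    refine le_trans step ?_
    rw [div_mul_eq_mul_div, one_mul, div_le_div_iff₀ (by positivity) (by positivity)]
    push_cast
    have e3 : (t + 1 + 1 : ℝ) = t + 2 := by ring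
    rw [e3]
    calc ρ * ((t+2) * Real.sqrt (t+2)) ≤ (t+1) * Real.sqrt (t+1) := hmain
      _ = 1 * ((t+1) * Real.sqrt (t+1)) := by ring

lemma wtm_le_tele (k : ℕ) :
    wtm k ≤ 6 / Real.sqrt ((k:ℝ)+1) - 6 / Real.sqrt ((k:ℝ)+2) := by
  have hk : (0:ℝ) ≤ (k:ℝ) := Nat.cast_nonneg k
  set t : ℝ := (k:ℝ) with ht
  set s : ℝ := Real.sqrt (t+1) with hsdef
  set u : ℝ := Real.sqrt (t+2) with hudef
  have hs : (0:ℝ) < s := Real.sqrt_pos.2 (by linarith)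
  have hu : (0:ℝ) < u := Real.sqrt_pos.2 (by linarith)
  have hs2 : s^2 = t+1 := Real.sq_sqrt (by linarith)
  have hu2 : u^2 = t+2 := Real.sq_sqrt (by linarith)
  have hs1 : 1 ≤ s := by nlinarith
  have hu2s : u ≤ 2*s := by nlinarith [sq_nonneg (2*s - u), sq_nonneg (2*s + u)]
  have hprod : (u - s) * (u + s) = 1 := by nlinarith
  have step1 : wtm k ≤ 1 / ((t+1) * s) := wtm_bound k
  refine le_trans step1 ?_
  rw [div_sub_div _ _ hs.ne' hu.ne', div_le_div_iff₀ (by positivity) (by positivity)]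
  have hkey : (6*u - 6*s) * ((t+1) * s) - 1 * (s*u) ≥ 0 := by
    nlinarith [hprod, mul_pos hs hu, mul_pos (mul_pos hs hs) hs,
      mul_le_mul_of_nonneg_right hu2s hs.le, sq_nonneg (u-s),
      mul_le_mul_of_nonneg_right hu2s (mul_pos hs hs).le]
  linarith [hkey]

lemma sum_wtm_le (n : ℕ) : ∑ k ∈ Finset.range n, wtm k ≤ 6 := by
  set f : ℕ → ℝ := fun k => 6 / Real.sqrt ((k:ℝ)+1) with hf
  have htele : ∀ k, wtm k ≤ f k - f (k+1) := by
    intro k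
    have := wtm_le_tele k
    have e : ((k+1:ℕ):ℝ) + 1 = (k:ℝ) + 2 := by push_cast; ring
    simp only [hf, e]
    exact this
  calc ∑ k ∈ Finset.range n, wtm k
      ≤ ∑ k ∈ Finset.range n, (f k - f (k+1)) :=
        Finset.sum_le_sum (fun k _ => htele k)
    _ = f 0 - f n := Finset.sum_range_sub' f n
    _ ≤ f 0 := by
        have : 0 ≤ f n := by positivity
        linarith
    _ = 6 := by simp [hf]

lemma summable_wtm : Summable wtm :=
  summable_of_sum_range_le (fun k => (wtm_pos k).le) sum_wtm_le

noncomputable def wr (r n : ℕ) : ℝ := fcA r n * (27/256)^n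

lemma wtm_eq_wr (k : ℕ) : wtm k = wr 1 k := term_eq k

lemma wr_nonneg (r n : ℕ) : 0 ≤ wr r n := by
  unfold wr fcA
  split
  · split <;> norm_num
  · positivity

lemma summable_norm_wr1 : Summable (fun n => ‖wr 1 n‖) := by
  have h : Summable (wr 1) := by
    have := summable_wtm
    simpa [funext wtm_eq_wr] using this
  simpa [Real.norm_eq_abs, abs_of_nonneg (wr_nonneg 1 _)] using h

lemma wr_conv (r s n : ℕ) :
    ∑ k ∈ Finset.range (n+1), wr r k * wr s (n-k) = wr (r+s) n := by
  have hpt : ∀ k ∈ Finset.range (n+1),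
      wr r k * wr s (n-k) = (fcA r k * fcA s (n-k)) * (27/256:ℝ)^n := by
    intro k hk
    simp only [Finset.mem_range] at hk
    unfold wr
    rw [show ((27:ℝ)/256)^n = (27/256:ℝ)^k * (27/256:ℝ)^(n-k) by
      rw [← pow_add]; congr 1; omega]
    ring
  rw [Finset.sum_congr rfl hpt, ← Finset.sum_mul, fcA_conv n r s]
  rfl

lemma cauchy_step (r s : ℕ)
    (hr : Summable (fun n => ‖wr r n‖)) (hs : Summable (fun n => ‖wr s n‖)) :
    ((∑' n, wr r n) * (∑' n, wr s n) = ∑' n, wr (r+s) n)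
      ∧ Summable (fun n => ‖wr (r+s) n‖) := by
  constructor
  · rw [tsum_mul_tsum_eq_tsum_sum_range_of_summable_norm hr hs]
    exact tsum_congr (fun n => wr_conv r s n)
  · have h := summable_norm_sum_mul_range_of_summable_norm hr hs
    exact h.congr (fun n => by rw [wr_conv r s n])

theorem whipple_sum_eval :
    Summable (fun k : ℕ =>
      pochR (1/4) k * pochR (1/2) k * pochR (3/4) k /
        (pochR (2/3) k * pochR (4/3) k * (k.factorial : ℝ))) ∧
    ∑' k : ℕ, pochR (1/4) k * pochR (1/2) k * pochR (3/4) k /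
        (pochR (2/3) k * pochR (4/3) k * (k.factorial : ℝ)) = 4/3 := by
  have hS : Summable (wr 1) := summable_norm_wr1.of_norm
  refine ⟨hS.congr (fun k => (term_eq k).symm), ?_⟩
  set S : ℝ := ∑' n, wr 1 n with hSdef
  have h2 := cauchy_step 1 1 summable_norm_wr1 summable_norm_wr1
  have h3 := cauchy_step 2 1 h2.2 summable_norm_wr1
  have h4 := cauchy_step 3 1 h3.2 summable_norm_wr1
  have hS4 : S * S * S * S = ∑' n, wr 4 n := by
    rw [show S * S * S * S = ((S*S)*S)*S by ring, hSdef, h2.1, h3.1, h4.1]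
  -- S = 1 + (27/256) * S^4
  have hshift : ∀ n : ℕ, wr 1 (n+1) = (27/256:ℝ) * wr 4 n := by
    intro n
    have h := fcA_rec 0 n
    have h0 : fcA 0 (n+1) = 0 := by simp [fcA]
    rw [h0, zero_add] at h
    norm_num at h
    unfold wr
    rw [h, pow_succ]
    ring
  have htsum0 : S = wr 1 0 + ∑' n, wr 1 (n+1) := Summable.tsum_eq_zero_add hS
  have hw0 : wr 1 0 = 1 := by
    unfold wr
    rw [fcA_zero_right]
    norm_num
  have htail : ∑' n, wr 1 (n+1) = (27/256:ℝ) * (S*S*S*S) := by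
    rw [tsum_congr hshift, tsum_mul_left, ← hS4]
  have heq : S = 1 + (27/256:ℝ) * (S*S*S*S) := by
    conv_lhs => rw [htsum0, hw0, htail]
  -- solve the quartic
  have hSpos : 1 ≤ S := by
    have := Summable.le_tsum hS 0 (fun i _ => wr_nonneg 1 i)
    rw [hw0] at this
    exact this
  have hq : (3*S - 4)^2 * (3*S^2 + 8*S + 16) = 0 := by
    linear_combination (-256:ℝ) * heq
  have hqpos : (0:ℝ) < 3*S^2 + 8*S + 16 := by positivity
  have hz : (3*S - 4)^2 = 0 := by
    rcases mul_eq_zero.mp hq with h | h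
    · exact h
    · exact absurd h hqpos.ne'
  have : 3*S - 4 = 0 := by
    exact pow_eq_zero_iff (by norm_num) |>.mp hz
  have hval : S = 4/3 := by linarith
  calc ∑' k : ℕ, pochR (1/4) k * pochR (1/2) k * pochR (3/4) k /
        (pochR (2/3) k * pochR (4/3) k * (k.factorial : ℝ))
      = ∑' k, wr 1 k := tsum_congr term_eq
    _ = 4/3 := hval
end
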